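/- (Alternative formula for S.) Let τ : C → T and τ̃ : C → T̃ be weak stability functions and κ : {1,…,n} → C. Then S({1,…,n},≤,κ,τ,τ̃) = Σ_{1≤b≤a≤n} Σ_{(α,β)} (−1)^{a−b}, where the inner sum is over all pairs of surjective maps α : {1,…,n} → {1,…,a} and β : {1,…,a} → {1,…,b} with i ≤ j implying α(i) ≤ α(j) and β(i) ≤ β(j), such that for each j = 1,…,a the subsequence (κ(i))_{i∈α⁻¹(j)} is τ-reversing, and, setting ν(k) = κ((β∘α)⁻¹(k)) for k = 1,…,b, the sequence (ν(1),…,ν(b)) is τ̃-semistable. -/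

import Mathlib

open scoped Classical
open Finset Function

/-- A weak stability function on `C ⊆ A` with values in a total order:
whenever `α, γ ∈ C` (so that `β = α + γ`), either `τ α ≤ τ β ≤ τ γ` or
`τ α ≥ τ β ≥ τ γ`. -/
def WeakStability {A T : Type*} [AddCommGroup A] [LinearOrder T] (C : Set A) (τ : A → T) : Prop :=
  ∀ α γ : A, α ∈ C → γ ∈ C →
    (τ α ≤ τ (α + γ) ∧ τ (α + γ) ≤ τ γ) ∨ (τ γ ≤ τ (α + γ) ∧ τ (α + γ) ≤ τ α)

/-- Sum `κ 0 + ⋯ + κ i`. -/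
def lowSum {A : Type*} [AddCommGroup A] (κ : ℕ → A) (i : ℕ) : A :=
  ∑ j ∈ Finset.range (i + 1), κ j

/-- Sum `κ (i+1) + ⋯ + κ (n-1)`. -/
def highSum {A : Type*} [AddCommGroup A] (κ : ℕ → A) (i n : ℕ) : A :=
  ∑ j ∈ Finset.Ico (i + 1) n, κ j

/-- Condition (a) at position `i` in the definition of the coefficient `S`. -/
def SCondA {A T T' : Type*} [AddCommGroup A] [LinearOrder T] [LinearOrder T']
    (τ : A → T) (τ' : A → T') (n : ℕ) (κ : ℕ → A) (i : ℕ) : Prop :=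
  τ (κ i) ≤ τ (κ (i + 1)) ∧ τ' (highSum κ i n) < τ' (lowSum κ i)

/-- Condition (b) at position `i` in the definition of the coefficient `S`. -/
def SCondB {A T T' : Type*} [AddCommGroup A] [LinearOrder T] [LinearOrder T']
    (τ : A → T) (τ' : A → T') (n : ℕ) (κ : ℕ → A) (i : ℕ) : Prop :=
  τ (κ (i + 1)) < τ (κ i) ∧ τ' (lowSum κ i) ≤ τ' (highSum κ i n)

/-- The transformation coefficient `S({1,…,n},≤,κ,τ,τ')` for the sequence
`κ 0, …, κ (n-1)` (indexed from `0`). -/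
noncomputable def Scoeff {A T T' : Type*} [AddCommGroup A] [LinearOrder T] [LinearOrder T']
    (τ : A → T) (τ' : A → T') (n : ℕ) (κ : ℕ → A) : ℤ :=
  if ∀ i ∈ Finset.range (n - 1), SCondA τ τ' n κ i ∨ SCondB τ τ' n κ i then
    (-1) ^ ((Finset.range (n - 1)).filter (SCondA τ τ' n κ)).card
  else 0

/-- The sequence `κ 0, …, κ (n-1)` is `τ`-reversing. -/
def Reversing {A T : Type*} [AddCommGroup A] [LinearOrder T] (τ : A → T) (n : ℕ) (κ : ℕ → A) :
    Prop :=
  ∀ i, i + 1 < n → τ (κ (i + 1)) < τ (κ i)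

/-- The sequence `κ 0, …, κ (n-1)` is `τ`-semistable. -/
def Semistable {A T : Type*} [AddCommGroup A] [LinearOrder T] (τ : A → T) (n : ℕ) (κ : ℕ → A) :
    Prop :=
  ∀ i, i + 1 < n → τ (lowSum κ i) ≤ τ (highSum κ i n)

/-- Extend a `Fin n`-indexed sequence to `ℕ` by zero. -/
def toSeq {A : Type*} [AddCommGroup A] {n : ℕ} (κ : Fin n → A) : ℕ → A :=
  fun j => if h : j < n then κ ⟨j, h⟩ else 0

/-- The subsequence of `κ` on a subset `s ⊆ Fin n`, enumerated in increasing order. -/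
noncomputable def fiberSeq {A : Type*} [AddCommGroup A] {n : ℕ} (κ : Fin n → A)
    (s : Finset (Fin n)) : ℕ → A :=
  fun j => if h : j < s.card then κ (s.orderIsoOfFin rfl ⟨j, h⟩).1 else 0

/-- The transformation coefficient `U({1,…,n},≤,κ,τ,τ')`. -/
noncomputable def Ucoeff {A T T' : Type*} [AddCommGroup A] [LinearOrder T] [LinearOrder T']
    (τ : A → T) (τ' : A → T') (n : ℕ) (κ : ℕ → A) : ℚ :=
  ∑ l ∈ Finset.Icc 1 n, ∑ m ∈ Finset.Icc l n,
    ∑ p ∈ Finset.univ.filter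
        (fun p : (Fin n → Fin m) × (Fin m → Fin l) =>
          Surjective p.1 ∧ Monotone p.1 ∧ Surjective p.2 ∧ Monotone p.2),
      (if (∀ i : Fin n, τ (κ i.1) =
              τ (∑ j ∈ Finset.univ.filter (fun j : Fin n => p.1 j = p.1 i), κ j.1)) ∧
          (∀ a : Fin l,
              τ' (∑ j ∈ Finset.univ.filter (fun j : Fin n => p.2 (p.1 j) = a), κ j.1) =
              τ' (∑ j ∈ Finset.range n, κ j)) then
        (∏ a : Fin l,
          ((Scoeff τ τ' (Finset.univ.filter (fun b : Fin m => p.2 b = a)).card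
            (fiberSeq
              (fun b : Fin m => ∑ j ∈ Finset.univ.filter (fun j : Fin n => p.1 j = b), κ j.1)
              (Finset.univ.filter (fun b : Fin m => p.2 b = a)))) : ℚ))
        * ((-1 : ℚ) ^ (l - 1) / (l : ℚ))
        * ∏ b : Fin m,
            ((1 : ℚ) / (Nat.factorial (Finset.univ.filter (fun j : Fin n => p.1 j = b)).card : ℚ))
      else 0)

namespace Stmt4Aux

open Finset Function

/-! ### cutVal basics -/

def cutVal (S : Finset ℕ) (i : ℕ) : ℕ := (S.filter (· < i)).card

lemma cutVal_zero (S : Finset ℕ) : cutVal S 0 = 0 := by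
  simp [cutVal]

lemma cutVal_mono (S : Finset ℕ) {i j : ℕ} (h : i ≤ j) : cutVal S i ≤ cutVal S j := by
  refine Finset.card_le_card (fun x hx => ?_)
  simp only [mem_filter] at hx ⊢
  exact ⟨hx.1, lt_of_lt_of_le hx.2 h⟩

lemma cutVal_succ (S : Finset ℕ) (i : ℕ) :
    cutVal S (i + 1) = cutVal S i + if i ∈ S then 1 else 0 := by
  classical
  have hsplit : S.filter (· < i + 1) = (S.filter (· < i)) ∪ (S.filter (· = i)) := by
    ext x
    simp only [mem_filter, mem_union, ← and_or_left]
    exact and_congr_right fun _ => by omega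
  have hdisj : Disjoint (S.filter (· < i)) (S.filter (· = i)) := by
    rw [Finset.disjoint_left]
    intro x h1 h2
    simp only [mem_filter] at h1 h2
    omega
  have heq : S.filter (· = i) = if i ∈ S then {i} else ∅ := Finset.filter_eq' S i
  rw [cutVal, cutVal, hsplit, Finset.card_union_of_disjoint hdisj, heq]
  split <;> simp

lemma cutVal_le (S : Finset ℕ) (i : ℕ) : cutVal S i ≤ S.card :=
  Finset.card_le_card (filter_subset _ _)

lemma cutVal_eq_card {S : Finset ℕ} {m : ℕ} (h : S ⊆ range m) : cutVal S m = S.card := by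
  unfold cutVal
  congr 1
  rw [Finset.filter_eq_self]
  intro x hx
  simpa using h hx

lemma nat_ivt {f : ℕ → ℕ} (h0 : f 0 = 0) (hstep : ∀ j, f (j + 1) ≤ f j + 1) :
    ∀ N k, k ≤ f N → ∃ i ≤ N, f i = k := by
  intro N
  induction N with
  | zero => intro k hk; exact ⟨0, le_refl 0, by omega⟩
  | succ N ih =>
    intro k hk
    by_cases h : k ≤ f N
    · obtain ⟨i, hi, hfi⟩ := ih k h
      exact ⟨i, by omega, hfi⟩
    · exact ⟨N + 1, le_refl _, by have := hstep N; omega⟩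

lemma cutVal_exists {S : Finset ℕ} {m : ℕ} (h : S ⊆ range m) {k : ℕ} (hk : k ≤ S.card) :
    ∃ i ≤ m, cutVal S i = k := by
  refine nat_ivt (cutVal_zero S) (fun j => ?_) m k (by rw [cutVal_eq_card h]; exact hk)
  rw [cutVal_succ]; split <;> omega

lemma cutVal_lt_cutVal {S : Finset ℕ} {f : ℕ} (hf : f ∈ S) (i : ℕ) :
    cutVal S f < cutVal S i ↔ f < i := by
  constructor
  · intro h
    by_contra hc
    exact absurd (cutVal_mono S (by omega : i ≤ f)) (by omega)
  · intro h
    have h1 : cutVal S (f + 1) = cutVal S f + 1 := by rw [cutVal_succ, if_pos hf]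
    have := cutVal_mono S (by omega : f + 1 ≤ i)
    omega

end Stmt4Aux
namespace Stmt4Aux

open Finset Function

variable {n a : ℕ}

lemma mem_lowerset {s : Finset (Fin n)} (hs : ∀ ⦃i j : Fin n⦄, i ≤ j → j ∈ s → i ∈ s)
    {i : Fin n} : i ∈ s ↔ (i : ℕ) < s.card := by
  constructor
  · intro h
    have hsub : Finset.Iic i ⊆ s := fun x hx => hs (Finset.mem_Iic.mp hx) h
    have := Finset.card_le_card hsub
    rw [Fin.card_Iic] at this
    omega
  · intro h
    by_contra hi
    have hsub : s ⊆ Finset.Iio i := by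
      intro x hx
      rw [Finset.mem_Iio]
      rcases lt_or_ge x i with h' | h'
      · exact h'
      · exact absurd (hs h' hx) hi
    have := Finset.card_le_card hsub
    rw [Fin.card_Iio] at this
    omega

/-- Number of `x` with `(p x : ℕ) < j`. -/
noncomputable def lowc (p : Fin n → Fin a) (j : ℕ) : ℕ :=
  (Finset.univ.filter (fun x : Fin n => (p x : ℕ) < j)).card

lemma lt_lowc {p : Fin n → Fin a} (hp : Monotone p) (i : Fin n) (j : ℕ) :
    (p i : ℕ) < j ↔ (i : ℕ) < lowc p j := by
  have := mem_lowerset (s := Finset.univ.filter (fun x : Fin n => (p x : ℕ) < j))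
    (fun x y hxy hy => by
      simp only [mem_filter, mem_univ, true_and] at hy ⊢
      exact lt_of_le_of_lt (hp hxy) hy) (i := i)
  simpa [lowc] using this

lemma lowc_le (p : Fin n → Fin a) (j : ℕ) : lowc p j ≤ n := by
  simpa [lowc] using Finset.card_le_card (Finset.filter_subset _ (Finset.univ : Finset (Fin n)))

lemma lowc_mono (p : Fin n → Fin a) {j k : ℕ} (h : j ≤ k) : lowc p j ≤ lowc p k := by
  refine Finset.card_le_card fun x hx => ?_
  simp only [mem_filter, mem_univ, true_and] at hx ⊢
  omega

lemma fiber_card {p : Fin n → Fin a} (hp : Monotone p) (j : Fin a) :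
    lowc p ((j : ℕ) + 1) = lowc p (j : ℕ) + (Finset.univ.filter (fun x : Fin n => p x = j)).card := by
  classical
  have hsplit : Finset.univ.filter (fun x : Fin n => (p x : ℕ) < (j : ℕ) + 1)
      = Finset.univ.filter (fun x : Fin n => (p x : ℕ) < (j : ℕ))
        ∪ Finset.univ.filter (fun x : Fin n => p x = j) := by
    ext x
    simp only [mem_filter, mem_union, mem_univ, true_and, Fin.ext_iff]
    omega
  have hdisj : Disjoint (Finset.univ.filter (fun x : Fin n => (p x : ℕ) < (j : ℕ)))
      (Finset.univ.filter (fun x : Fin n => p x = j)) := by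
    rw [Finset.disjoint_left]
    intro x h1 h2
    simp only [mem_filter, mem_univ, true_and, Fin.ext_iff] at h1 h2
    omega
  rw [lowc, lowc, hsplit, Finset.card_union_of_disjoint hdisj]

lemma mem_fiber_iff {p : Fin n → Fin a} (hp : Monotone p) (j : Fin a) (x : Fin n) :
    x ∈ Finset.univ.filter (fun x : Fin n => p x = j)
      ↔ lowc p (j : ℕ) ≤ (x : ℕ) ∧ (x : ℕ) < lowc p ((j : ℕ) + 1) := by
  have h1 := lt_lowc hp x (j : ℕ)
  have h2 := lt_lowc hp x ((j : ℕ) + 1)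
  simp only [mem_filter, mem_univ, true_and, Fin.ext_iff]
  omega

lemma fiber_orderIso {p : Fin n → Fin a} (hp : Monotone p) (j : Fin a) (t : ℕ)
    (h : t < (Finset.univ.filter (fun x : Fin n => p x = j)).card) :
    (((Finset.univ.filter (fun x : Fin n => p x = j)).orderIsoOfFin rfl ⟨t, h⟩ : Fin n) : ℕ)
      = lowc p (j : ℕ) + t := by
  classical
  set s := Finset.univ.filter (fun x : Fin n => p x = j) with hs
  have hcard : lowc p ((j : ℕ) + 1) = lowc p (j : ℕ) + s.card := by
    rw [hs]; exact fiber_card hp j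
  have hle := lowc_le p ((j : ℕ) + 1)
  have hbound : ∀ t' : Fin s.card, lowc p (j : ℕ) + (t' : ℕ) < n := fun t' => by
    have := t'.2; omega
  set f : Fin s.card → Fin n := fun t' => ⟨lowc p (j : ℕ) + (t' : ℕ), hbound t'⟩ with hf
  have hfs : ∀ t', f t' ∈ s := by
    intro t'
    rw [hs, mem_fiber_iff hp]
    have := t'.2
    simp only [hf]
    omega
  have hmono : StrictMono f := by
    intro x y hxy
    simp only [hf, Fin.mk_lt_mk]
    omega
  have := Finset.orderEmbOfFin_unique (s := s) rfl hfs hmono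
  have happ : s.orderEmbOfFin rfl ⟨t, h⟩ = f ⟨t, h⟩ := by rw [← this]
  rw [← Finset.coe_orderIsoOfFin_apply] at happ
  rw [happ]

/-! ### facts about monotone surjective maps -/

lemma apply_zero {p : Fin n → Fin a} (hp : Monotone p) (hs : Surjective p) (h0 : 0 < n) :
    (p ⟨0, h0⟩ : ℕ) = 0 := by
  obtain ⟨x, hx⟩ := hs ⟨0, (p ⟨0, h0⟩).pos⟩
  have : p ⟨0, h0⟩ ≤ p x := hp (by simp [Fin.le_def])
  rw [hx, Fin.le_def] at this
  simpa using this

lemma apply_last {p : Fin n → Fin a} (hp : Monotone p) (hs : Surjective p) (h0 : 0 < n) :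
    (p ⟨n - 1, by omega⟩ : ℕ) = a - 1 := by
  have ha : 0 < a := (p ⟨0, h0⟩).pos
  obtain ⟨x, hx⟩ := hs ⟨a - 1, by omega⟩
  have h1 : p x ≤ p ⟨n - 1, by omega⟩ := hp (by simp [Fin.le_def]; omega)
  have h2 : (p ⟨n - 1, by omega⟩ : ℕ) ≤ a - 1 := by
    have := (p ⟨n - 1, by omega⟩).2; omega
  rw [hx] at h1
  simp only [Fin.le_def] at h1
  omega

lemma apply_step {p : Fin n → Fin a} (hp : Monotone p) (hs : Surjective p) {i : ℕ}
    (h : i + 1 < n) :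
    (p ⟨i + 1, h⟩ : ℕ) ≤ (p ⟨i, by omega⟩ : ℕ) + 1 := by
  by_cases hv : (p ⟨i, by omega⟩ : ℕ) + 1 < a
  · obtain ⟨x, hx⟩ := hs ⟨(p ⟨i, by omega⟩ : ℕ) + 1, hv⟩
    have hxi : (i : ℕ) < (x : ℕ) := by
      by_contra hc
      have : p x ≤ p ⟨i, by omega⟩ := hp (by simp [Fin.le_def]; omega)
      rw [hx] at this
      simp [Fin.le_def] at this
    have : p ⟨i + 1, h⟩ ≤ p x := hp (by simp [Fin.le_def]; omega)
    rw [hx] at this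
    simpa [Fin.le_def] using this
  · have := (p ⟨i + 1, h⟩).2
    omega

end Stmt4Aux
namespace Stmt4Aux

open Finset Function

variable {n a b : ℕ}

/-- The set of positions `i` (with `i + 1 < n`) where `p` jumps. -/
noncomputable def cutSetF (p : Fin n → Fin a) : Finset ℕ :=
  (Finset.range (n - 1)).filter
    (fun i => ∀ h : i + 1 < n, p ⟨i, by omega⟩ ≠ p ⟨i + 1, h⟩)

lemma cutSetF_subset (p : Fin n → Fin a) : cutSetF p ⊆ Finset.range (n - 1) :=
  Finset.filter_subset _ _

lemma mem_cutSetF {p : Fin n → Fin a} (hn : 1 ≤ n) {i : ℕ} :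
    i ∈ cutSetF p ↔ ∃ h : i + 1 < n, p ⟨i, by omega⟩ ≠ p ⟨i + 1, h⟩ := by
  unfold cutSetF
  simp only [Finset.mem_filter, Finset.mem_range]
  constructor
  · rintro ⟨h1, h2⟩
    exact ⟨by omega, h2 (by omega)⟩
  · rintro ⟨h1, h2⟩
    exact ⟨by omega, fun _ => h2⟩

lemma cutVal_cutSetF {p : Fin n → Fin a} (hp : Monotone p) (hs : Surjective p) :
    ∀ i : ℕ, ∀ h : i < n, cutVal (cutSetF p) i = (p ⟨i, h⟩ : ℕ) := by
  intro i
  induction i with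
  | zero => intro h; rw [cutVal_zero, apply_zero hp hs h]
  | succ i ih =>
    intro h
    have hi : i < n := by omega
    rw [cutVal_succ, ih hi]
    have hstep := apply_step hp hs h
    have hmono : (p ⟨i, hi⟩ : ℕ) ≤ (p ⟨i + 1, h⟩ : ℕ) := hp (by simp [Fin.le_def])
    by_cases hc : i ∈ cutSetF p
    · rw [if_pos hc]
      obtain ⟨h', hne⟩ := (mem_cutSetF (by omega)).mp hc
      have : (p ⟨i, hi⟩ : ℕ) ≠ (p ⟨i + 1, h⟩ : ℕ) := by
        intro heq; exact hne (Fin.ext heq)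
      omega
    · rw [if_neg hc]
      have : p ⟨i, hi⟩ = p ⟨i + 1, h⟩ := by
        by_contra hne
        exact hc ((mem_cutSetF (by omega)).mpr ⟨h, hne⟩)
      rw [this]
      omega

lemma card_cutSetF {p : Fin n → Fin a} (hp : Monotone p) (hs : Surjective p) (hn : 1 ≤ n) :
    (cutSetF p).card = a - 1 := by
  have h1 : cutVal (cutSetF p) (n - 1) = (cutSetF p).card := cutVal_eq_card (cutSetF_subset p)
  have h2 := cutVal_cutSetF hp hs (n - 1) (by omega)
  rw [h1] at h2
  rw [h2, apply_last hp hs (by omega)]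

/-- A map whose values agree with `cutVal F` has cut set `F`. -/
lemma cutSetF_eq {F : Finset ℕ} (hF : F ⊆ Finset.range (n - 1)) (hn : 1 ≤ n)
    {r : Fin n → Fin b} (hr : ∀ x : Fin n, (r x : ℕ) = cutVal F (x : ℕ)) :
    cutSetF r = F := by
  ext i
  rw [mem_cutSetF hn]
  constructor
  · rintro ⟨h, hne⟩
    have h1 := hr ⟨i, by omega⟩
    have h2 := hr ⟨i + 1, h⟩
    simp only [Fin.val_mk] at h1 h2
    have : cutVal F i ≠ cutVal F (i + 1) := by
      intro heq
      exact hne (Fin.ext (by rw [h1, h2, heq]))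
    rw [cutVal_succ] at this
    by_contra hc
    rw [if_neg hc] at this
    omega
  · intro hi
    have h : i + 1 < n := by have := hF hi; simp only [Finset.mem_range] at this; omega
    refine ⟨h, fun heq => ?_⟩
    have h1 := hr ⟨i, by omega⟩
    have h2 := hr ⟨i + 1, h⟩
    simp only [Fin.val_mk] at h1 h2
    rw [heq, h2] at h1
    rw [cutVal_succ, if_pos hi] at h1
    omega

/-- Monotonicity of the constructed first map. -/
lemma cutMap_mono {S : Finset ℕ} {p : Fin n → Fin a}
    (hp : ∀ x : Fin n, (p x : ℕ) = cutVal S (x : ℕ)) : Monotone p := by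
  intro x y hxy
  rw [Fin.le_def, hp, hp]
  exact cutVal_mono S hxy

lemma cutMap_surj {S : Finset ℕ} (hS : S ⊆ Finset.range (n - 1)) (hn : 1 ≤ n)
    (ha : S.card + 1 = a) {p : Fin n → Fin a}
    (hp : ∀ x : Fin n, (p x : ℕ) = cutVal S (x : ℕ)) : Surjective p := by
  intro k
  obtain ⟨i, hi, hval⟩ := cutVal_exists hS (k := (k : ℕ)) (by have := k.2; omega)
  exact ⟨⟨i, by omega⟩, Fin.ext (by rw [hp]; exact hval)⟩

/-- The composite of the constructed maps computes `cutVal F`. -/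
lemma comp_val {S F : Finset ℕ} (hFS : F ⊆ S) {p : Fin n → Fin a} {q : Fin a → Fin b}
    (hp : ∀ x : Fin n, (p x : ℕ) = cutVal S (x : ℕ))
    (hq : ∀ j : Fin a, (q j : ℕ) = (F.filter (fun f => cutVal S f < (j : ℕ))).card) :
    ∀ x : Fin n, (q (p x) : ℕ) = cutVal F (x : ℕ) := by
  intro x
  rw [hq, hp]
  unfold cutVal
  congr 1
  apply Finset.filter_congr
  intro f hf
  exact cutVal_lt_cutVal (hFS hf) _

lemma cutMap2_mono {S F : Finset ℕ} {q : Fin a → Fin b}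
    (hq : ∀ j : Fin a, (q j : ℕ) = (F.filter (fun f => cutVal S f < (j : ℕ))).card) :
    Monotone q := by
  intro x y hxy
  rw [Fin.le_def, hq, hq]
  refine Finset.card_le_card fun f hf => ?_
  simp only [Finset.mem_filter] at hf ⊢
  exact ⟨hf.1, lt_of_lt_of_le hf.2 hxy⟩

end Stmt4Aux
namespace Stmt4Aux

open Finset Function

variable {A T T' : Type*} [AddCommGroup A] [LinearOrder T] [LinearOrder T'] {n a b : ℕ}

lemma fiberSeq_apply {p : Fin n → Fin a} (hp : Monotone p) (κ : Fin n → A) (j : Fin a) (t : ℕ)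
    (h : t < (Finset.univ.filter (fun x : Fin n => p x = j)).card)
    (hb : lowc p (j : ℕ) + t < n) :
    fiberSeq κ (Finset.univ.filter (fun x : Fin n => p x = j)) t = κ ⟨lowc p (j : ℕ) + t, hb⟩ := by
  unfold fiberSeq
  rw [dif_pos h]
  congr 1
  exact Fin.ext (fiber_orderIso hp j t h)

lemma fiber_bound {p : Fin n → Fin a} (hp : Monotone p) (j : Fin a) (t : ℕ)
    (h : t < (Finset.univ.filter (fun x : Fin n => p x = j)).card) :
    lowc p (j : ℕ) + t < n := by
  have h1 := fiber_card hp j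
  have h2 := lowc_le p ((j : ℕ) + 1)
  omega

lemma rev_iff {p : Fin n → Fin a} (hp : Monotone p) (hs : Surjective p)
    (κ : Fin n → A) (τ : A → T) :
    (∀ j : Fin a, Reversing τ (Finset.univ.filter (fun i : Fin n => p i = j)).card
        (fiberSeq κ (Finset.univ.filter (fun i : Fin n => p i = j))))
      ↔ ∀ (i : ℕ) (h : i + 1 < n), p ⟨i, by omega⟩ = p ⟨i + 1, h⟩ →
          τ (κ ⟨i + 1, h⟩) < τ (κ ⟨i, by omega⟩) := by
  constructor
  · intro hrev i h heq
    set j := p ⟨i, by omega⟩ with hj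
    have hm1 : (⟨i, by omega⟩ : Fin n) ∈ Finset.univ.filter (fun x : Fin n => p x = j) := by
      simp [hj]
    have hm2 : (⟨i + 1, h⟩ : Fin n) ∈ Finset.univ.filter (fun x : Fin n => p x = j) := by
      simp [← heq, hj]
    rw [mem_fiber_iff hp] at hm1 hm2
    simp only [Fin.val_mk] at hm1 hm2
    have hcard := fiber_card hp j
    set t := i - lowc p (j : ℕ) with ht
    have h1 : t + 1 < (Finset.univ.filter (fun x : Fin n => p x = j)).card := by omega
    have hb1 : lowc p (j : ℕ) + t < n := by omega
    have hb2 : lowc p (j : ℕ) + (t + 1) < n := by omega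
    have key := hrev j t h1
    rw [fiberSeq_apply hp κ j t (by omega) hb1,
        fiberSeq_apply hp κ j (t + 1) h1 hb2] at key
    have eA : κ (⟨lowc p (j : ℕ) + (t + 1), hb2⟩ : Fin n) = κ ⟨i + 1, h⟩ := by
      congr 1
      exact Fin.ext (by simp only [Fin.val_mk]; omega)
    have eB : κ (⟨lowc p (j : ℕ) + t, hb1⟩ : Fin n) = κ ⟨i, by omega⟩ := by
      congr 1
      exact Fin.ext (by simp only [Fin.val_mk]; omega)
    rw [eA, eB] at key
    exact key
  · intro hdesc j t ht
    have hb1 : lowc p (j : ℕ) + t < n := fiber_bound hp j t (by omega)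
    have hb2 : lowc p (j : ℕ) + (t + 1) < n := fiber_bound hp j (t + 1) ht
    rw [fiberSeq_apply hp κ j t (by omega) hb1, fiberSeq_apply hp κ j (t + 1) ht hb2]
    have hm1 : (⟨lowc p (j : ℕ) + t, hb1⟩ : Fin n)
        ∈ Finset.univ.filter (fun x : Fin n => p x = j) := by
      rw [mem_fiber_iff hp]
      have hcard := fiber_card hp j
      simp only [Fin.val_mk]
      omega
    have hb2' : lowc p (j : ℕ) + t + 1 < n := by omega
    have hm2 : (⟨lowc p (j : ℕ) + t + 1, hb2'⟩ : Fin n)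
        ∈ Finset.univ.filter (fun x : Fin n => p x = j) := by
      rw [mem_fiber_iff hp]
      have hcard := fiber_card hp j
      simp only [Fin.val_mk]
      omega
    simp only [Finset.mem_filter, Finset.mem_univ, true_and] at hm1 hm2
    exact hdesc (lowc p (j : ℕ) + t) hb2' (hm1.trans hm2.symm)

end Stmt4Aux
namespace Stmt4Aux

open Finset Function

variable {A T T' : Type*} [AddCommGroup A] [LinearOrder T] [LinearOrder T'] {n b : ℕ}

lemma lowSum_toSeq (κ : Fin n → A) {i : ℕ} (hi : i < n) :
    lowSum (toSeq κ) i = ∑ x ∈ Finset.univ.filter (fun x : Fin n => (x : ℕ) ≤ i), κ x := by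
  have hset : (Finset.range n).filter (fun j => j ≤ i) = Finset.range (i + 1) := by
    ext j
    simp only [Finset.mem_filter, Finset.mem_range]
    omega
  rw [lowSum, ← hset, Finset.sum_filter,
    ← Fin.sum_univ_eq_sum_range (fun j => if j ≤ i then toSeq κ j else 0),
    Finset.sum_filter]
  refine Finset.sum_congr rfl fun x _ => ?_
  by_cases h : (x : ℕ) ≤ i <;> simp [h, toSeq, x.2]

lemma highSum_toSeq (κ : Fin n → A) (i : ℕ) :
    highSum (toSeq κ) i n = ∑ x ∈ Finset.univ.filter (fun x : Fin n => i < (x : ℕ)), κ x := by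
  have hset : (Finset.range n).filter (fun j => i < j) = Finset.Ico (i + 1) n := by
    ext j
    simp only [Finset.mem_filter, Finset.mem_range, Finset.mem_Ico]
    omega
  rw [highSum, ← hset, Finset.sum_filter,
    ← Fin.sum_univ_eq_sum_range (fun j => if i < j then toSeq κ j else 0),
    Finset.sum_filter]
  refine Finset.sum_congr rfl fun x _ => ?_
  by_cases h : i < (x : ℕ) <;> simp [h, toSeq, x.2]

end Stmt4Aux

namespace Stmt4Aux

open Finset Function

variable {A T T' : Type*} [AddCommGroup A] [LinearOrder T] [LinearOrder T'] {n b : ℕ}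

lemma nu_low (q : Fin n → Fin b) (κ : Fin n → A) {k : ℕ} (hk : k < b) :
    lowSum (fun t => if h : t < b then
        ∑ x ∈ Finset.univ.filter (fun x : Fin n => q x = ⟨t, h⟩), κ x else 0) k
      = ∑ x ∈ Finset.univ.filter (fun x : Fin n => (q x : ℕ) ≤ k), κ x := by
  rw [lowSum]
  have h1 : ∀ t ∈ Finset.range (k + 1),
      (if h : t < b then ∑ x ∈ Finset.univ.filter (fun x : Fin n => q x = ⟨t, h⟩), κ x else 0)
      = ∑ x ∈ (Finset.univ.filter (fun x : Fin n => (q x : ℕ) ≤ k)).filter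
          (fun x => (q x : ℕ) = t), κ x := by
    intro t htm
    rw [Finset.mem_range] at htm
    have htb : t < b := by omega
    rw [dif_pos htb]
    refine Finset.sum_congr ?_ (fun _ _ => rfl)
    ext x
    simp only [Finset.mem_filter, Finset.mem_univ, true_and, Fin.ext_iff, Fin.val_mk]
    omega
  rw [Finset.sum_congr rfl h1]
  exact Finset.sum_fiberwise_of_maps_to (fun x hx => by
    simp only [Finset.mem_filter, Finset.mem_univ, true_and] at hx
    simp only [Finset.mem_range]
    omega) κ

lemma nu_high (q : Fin n → Fin b) (κ : Fin n → A) {k : ℕ} (hk : k < b) :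
    highSum (fun t => if h : t < b then
        ∑ x ∈ Finset.univ.filter (fun x : Fin n => q x = ⟨t, h⟩), κ x else 0) k b
      = ∑ x ∈ Finset.univ.filter (fun x : Fin n => k < (q x : ℕ)), κ x := by
  rw [highSum]
  have h1 : ∀ t ∈ Finset.Ico (k + 1) b,
      (if h : t < b then ∑ x ∈ Finset.univ.filter (fun x : Fin n => q x = ⟨t, h⟩), κ x else 0)
      = ∑ x ∈ (Finset.univ.filter (fun x : Fin n => k < (q x : ℕ))).filter
          (fun x => (q x : ℕ) = t), κ x := by
    intro t htm
    rw [Finset.mem_Ico] at htm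
    have htb : t < b := by omega
    rw [dif_pos htb]
    refine Finset.sum_congr ?_ (fun _ _ => rfl)
    ext x
    simp only [Finset.mem_filter, Finset.mem_univ, true_and, Fin.ext_iff, Fin.val_mk]
    omega
  rw [Finset.sum_congr rfl h1]
  exact Finset.sum_fiberwise_of_maps_to (fun x hx => by
    simp only [Finset.mem_filter, Finset.mem_univ, true_and] at hx
    simp only [Finset.mem_Ico]
    have := (q x).2
    omega) κ

lemma semi_iff {q : Fin n → Fin b} (hq : Monotone q) (hs : Surjective q)
    (κ : Fin n → A) (τt : A → T') (hn : 1 ≤ n) :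
    Semistable τt b (fun t => if h : t < b then
        ∑ x ∈ Finset.univ.filter (fun x : Fin n => q x = ⟨t, h⟩), κ x else 0)
      ↔ ∀ i ∈ cutSetF q, τt (lowSum (toSeq κ) i) ≤ τt (highSum (toSeq κ) i n) := by
  constructor
  · intro hsemi i hi
    obtain ⟨h, hne⟩ := (mem_cutSetF hn).mp hi
    set k := (q ⟨i, by omega⟩ : ℕ) with hk
    have hk1 : (q ⟨i + 1, h⟩ : ℕ) = k + 1 := by
      have h1 : (q ⟨i, by omega⟩ : ℕ) ≤ (q ⟨i + 1, h⟩ : ℕ) := hq (by simp [Fin.le_def])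
      have h2 := apply_step hq hs h
      have h3 : (q ⟨i, by omega⟩ : ℕ) ≠ (q ⟨i + 1, h⟩ : ℕ) := fun he => hne (Fin.ext he)
      omega
    have hkb : k + 1 < b := by have := (q ⟨i + 1, h⟩).2; omega
    have hfilter : Finset.univ.filter (fun x : Fin n => (q x : ℕ) ≤ k)
        = Finset.univ.filter (fun x : Fin n => (x : ℕ) ≤ i) := by
      ext x
      simp only [Finset.mem_filter, Finset.mem_univ, true_and]
      constructor
      · intro hx
        by_contra hc
        have h4 : q ⟨i + 1, h⟩ ≤ q x := hq (by simp only [Fin.le_def, Fin.val_mk]; omega)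
        rw [Fin.le_def, hk1] at h4
        omega
      · intro hx
        have h4 : q x ≤ q ⟨i, by omega⟩ := hq (by simp only [Fin.le_def, Fin.val_mk]; omega)
        rw [Fin.le_def] at h4
        omega
    have hfilter2 : Finset.univ.filter (fun x : Fin n => k < (q x : ℕ))
        = Finset.univ.filter (fun x : Fin n => i < (x : ℕ)) := by
      ext x
      simp only [Finset.mem_filter, Finset.mem_univ, true_and]
      have e1 := Finset.ext_iff.mp hfilter x
      simp only [Finset.mem_filter, Finset.mem_univ, true_and] at e1
      omega
    have hres := hsemi k hkb
    rw [nu_low q κ (by omega), nu_high q κ (by omega), hfilter, hfilter2] at hres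
    rw [lowSum_toSeq κ (by omega : i < n), highSum_toSeq κ i]
    exact hres
  · intro hcut k hkb
    obtain ⟨x0, hx0⟩ := hs ⟨k, by omega⟩
    obtain ⟨x1, hx1⟩ := hs ⟨k + 1, hkb⟩
    have hx0' : (x0 : ℕ) < lowc q (k + 1) := by
      rw [← lt_lowc hq]
      rw [hx0]
      simp
    have hx1' : lowc q (k + 1) ≤ (x1 : ℕ) := by
      by_contra hc
      rw [not_le, ← lt_lowc hq, hx1] at hc
      simp at hc
    set i := lowc q (k + 1) - 1 with hidef
    have hi1 : i + 1 = lowc q (k + 1) := by omega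
    have hin : i + 1 < n := by have := x1.2; omega
    have hqi : (q ⟨i, by omega⟩ : ℕ) ≤ k := by
      have := (lt_lowc hq ⟨i, by omega⟩ (k + 1)).mpr (by simp only [Fin.val_mk]; omega)
      omega
    have hqi1 : k + 1 ≤ (q ⟨i + 1, hin⟩ : ℕ) := by
      by_contra hc
      rw [not_le] at hc
      have := (lt_lowc hq ⟨i + 1, hin⟩ (k + 1)).mp hc
      simp only [Fin.val_mk] at this
      omega
    have hmem : i ∈ cutSetF q := by
      rw [mem_cutSetF hn]
      refine ⟨hin, fun he => ?_⟩
      rw [Fin.ext_iff] at he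
      omega
    have hfilter : Finset.univ.filter (fun x : Fin n => (q x : ℕ) ≤ k)
        = Finset.univ.filter (fun x : Fin n => (x : ℕ) ≤ i) := by
      ext x
      simp only [Finset.mem_filter, Finset.mem_univ, true_and]
      have := lt_lowc hq x (k + 1)
      omega
    have hfilter2 : Finset.univ.filter (fun x : Fin n => k < (q x : ℕ))
        = Finset.univ.filter (fun x : Fin n => i < (x : ℕ)) := by
      ext x
      simp only [Finset.mem_filter, Finset.mem_univ, true_and]
      have := lt_lowc hq x (k + 1)
      omega
    have hres := hcut i hmem
    rw [lowSum_toSeq κ (by omega : i < n), highSum_toSeq κ i, ← hfilter, ← hfilter2] at hres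
    rw [nu_low q κ (by omega), nu_high q κ (by omega)]
    exact hres

end Stmt4Aux
namespace Stmt4Aux

open Finset Function

variable {A T T' : Type*} [AddCommGroup A] [LinearOrder T] [LinearOrder T']

/-- Descent positions. -/
noncomputable def dSet (τ : A → T) {n : ℕ} (κ : Fin n → A) : Finset ℕ :=
  (Finset.range (n - 1)).filter fun i => τ (toSeq κ (i + 1)) < τ (toSeq κ i)

/-- Semistable positions. -/
noncomputable def gSet (τt : A → T') {n : ℕ} (κ : Fin n → A) : Finset ℕ :=
  (Finset.range (n - 1)).filter fun i =>
    τt (lowSum (toSeq κ) i) ≤ τt (highSum (toSeq κ) i n)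

lemma dSet_subset (τ : A → T) {n : ℕ} (κ : Fin n → A) :
    dSet τ κ ⊆ Finset.range (n - 1) := Finset.filter_subset _ _

lemma gSet_subset (τt : A → T') {n : ℕ} (κ : Fin n → A) :
    gSet τt κ ⊆ Finset.range (n - 1) := Finset.filter_subset _ _

lemma scoeff_eval (τ : A → T) (τt : A → T') {n : ℕ} (κ : Fin n → A) :
    Scoeff τ τt n (toSeq κ) =
      if dSet τ κ = gSet τt κ then (-1) ^ (n - 1 - (dSet τ κ).card) else 0 := by
  classical
  have hAB : ∀ i, (SCondA τ τt n (toSeq κ) i ∨ SCondB τ τt n (toSeq κ) i) ↔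
      ((τ (toSeq κ (i + 1)) < τ (toSeq κ i)) ↔
        (τt (lowSum (toSeq κ) i) ≤ τt (highSum (toSeq κ) i n))) := by
    intro i
    rw [SCondA, SCondB]
    constructor
    · rintro (⟨h1, h2⟩ | ⟨h1, h2⟩)
      · exact iff_of_false (not_lt.mpr h1) (not_le.mpr h2)
      · exact iff_of_true h1 h2
    · intro hiff
      by_cases hd : τ (toSeq κ (i + 1)) < τ (toSeq κ i)
      · exact Or.inr ⟨hd, hiff.mp hd⟩
      · exact Or.inl ⟨not_lt.mp hd, not_le.mp (fun hg => hd (hiff.mpr hg))⟩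
  rw [Scoeff]
  by_cases hC : ∀ i ∈ Finset.range (n - 1), SCondA τ τt n (toSeq κ) i ∨ SCondB τ τt n (toSeq κ) i
  · rw [if_pos hC]
    have hDG : dSet τ κ = gSet τt κ := by
      ext i
      simp only [dSet, gSet, Finset.mem_filter]
      constructor
      · rintro ⟨hir, hd⟩
        exact ⟨hir, ((hAB i).mp (hC i hir)).mp hd⟩
      · rintro ⟨hir, hg⟩
        exact ⟨hir, ((hAB i).mp (hC i hir)).mpr hg⟩
    rw [if_pos hDG]
    congr 1
    have hfs : (Finset.range (n - 1)).filter (SCondA τ τt n (toSeq κ))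
        = Finset.range (n - 1) \ dSet τ κ := by
      ext i
      simp only [Finset.mem_filter, Finset.mem_sdiff, dSet]
      constructor
      · rintro ⟨hir, hA⟩
        refine ⟨hir, fun hmem => ?_⟩
        exact absurd hmem.2 (not_lt.mpr hA.1)
      · rintro ⟨hir, hnd⟩
        rcases hC i hir with hA | hB
        · exact ⟨hir, hA⟩
        · exact absurd ⟨hir, hB.1⟩ hnd
    rw [hfs, Finset.card_sdiff_of_subset (dSet_subset τ κ), Finset.card_range]
  · rw [if_neg hC]
    have hne : ¬ dSet τ κ = gSet τt κ := by
      intro hDG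
      apply hC
      intro i hir
      rw [hAB i]
      have hmem := Finset.ext_iff.mp hDG i
      simp only [dSet, gSet, Finset.mem_filter] at hmem
      constructor
      · intro hd
        exact (hmem.mp ⟨hir, hd⟩).2
      · intro hg
        exact (hmem.mpr ⟨hir, hg⟩).2
    rw [if_neg hne]

lemma neg_one_pow_sub {s f : ℕ} (h : f ≤ s) :
    ((-1 : ℤ)) ^ (s - f) = (-1) ^ s * (-1) ^ f := by
  have h1 : ((-1 : ℤ)) ^ (s - f) * (-1) ^ f = (-1) ^ s := by
    rw [← pow_add, Nat.sub_add_cancel h]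
  have h2 : ((-1 : ℤ)) ^ f * (-1) ^ f = 1 := by
    rw [← mul_pow]
    norm_num
  calc ((-1 : ℤ)) ^ (s - f) = (-1) ^ (s - f) * ((-1) ^ f * (-1) ^ f) := by rw [h2, mul_one]
    _ = ((-1) ^ (s - f) * (-1) ^ f) * (-1) ^ f := by ring
    _ = (-1) ^ s * (-1) ^ f := by rw [h1]

lemma sum_powerset_filter_subset (M Dc : Finset ℕ) :
    (∑ S ∈ M.powerset.filter (fun S => Dc ⊆ S), (-1 : ℤ) ^ S.card)
      = if M = Dc then (-1) ^ Dc.card else 0 := by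
  classical
  by_cases hDM : Dc ⊆ M
  · have hbij : (∑ S ∈ M.powerset.filter (fun S => Dc ⊆ S), (-1 : ℤ) ^ S.card)
        = ∑ E ∈ (M \ Dc).powerset, (-1 : ℤ) ^ (E ∪ Dc).card := by
      refine Finset.sum_bij' (fun S _ => S \ Dc) (fun E _ => E ∪ Dc) ?_ ?_ ?_ ?_ ?_
      · intro S hS
        rw [Finset.mem_filter, Finset.mem_powerset] at hS
        rw [Finset.mem_powerset]
        exact Finset.sdiff_subset_sdiff hS.1 (le_refl _)
      · intro E hE
        rw [Finset.mem_powerset] at hE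
        rw [Finset.mem_filter, Finset.mem_powerset]
        exact ⟨Finset.union_subset (hE.trans Finset.sdiff_subset) hDM,
          Finset.subset_union_right⟩
      · intro S hS
        rw [Finset.mem_filter] at hS
        exact Finset.sdiff_union_of_subset hS.2
      · intro E hE
        rw [Finset.mem_powerset] at hE
        refine Finset.union_sdiff_cancel_right ?_
        exact Finset.disjoint_left.mpr fun x hx1 hx2 =>
          (Finset.mem_sdiff.mp (hE hx1)).2 hx2
      · intro S hS
        rw [Finset.mem_filter] at hS
        rw [Finset.sdiff_union_of_subset hS.2]
    rw [hbij]
    have hcard : ∀ E ∈ (M \ Dc).powerset, ((-1 : ℤ)) ^ (E ∪ Dc).card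
        = (-1 : ℤ) ^ Dc.card * (-1) ^ E.card := by
      intro E hE
      rw [Finset.mem_powerset] at hE
      have hdisj : Disjoint E Dc := Finset.disjoint_left.mpr fun x hx1 hx2 =>
        (Finset.mem_sdiff.mp (hE hx1)).2 hx2
      rw [Finset.card_union_of_disjoint hdisj, pow_add, mul_comm]
    rw [Finset.sum_congr rfl hcard, ← Finset.mul_sum, sum_powerset_neg_one_pow_card]
    by_cases hMD : M = Dc
    · rw [if_pos hMD, if_pos (by rw [hMD, Finset.sdiff_self]), mul_one]
    · rw [if_neg hMD, if_neg (fun he => hMD (le_antisymm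
        (Finset.sdiff_eq_empty_iff_subset.mp he) hDM)), mul_zero]
  · have hempty : M.powerset.filter (fun S => Dc ⊆ S) = ∅ := by
      refine Finset.eq_empty_of_forall_notMem fun S hS => ?_
      rw [Finset.mem_filter, Finset.mem_powerset] at hS
      exact hDM (hS.2.trans hS.1)
    rw [hempty, Finset.sum_empty, if_neg (fun he => hDM (by rw [he]))]

lemma key_sum (m : ℕ) (Dc G : Finset ℕ) :
    (∑ S ∈ (Finset.range m).powerset.filter (fun S => Dc ⊆ S),
      ∑ F ∈ (S ∩ G).powerset, (-1 : ℤ) ^ (S.card - F.card))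
      = if Finset.range m \ G = Dc then (-1 : ℤ) ^ Dc.card else 0 := by
  classical
  have hinner : ∀ S ∈ (Finset.range m).powerset.filter (fun S => Dc ⊆ S),
      (∑ F ∈ (S ∩ G).powerset, (-1 : ℤ) ^ (S.card - F.card))
        = (-1 : ℤ) ^ S.card * (if S ∩ G = ∅ then 1 else 0) := by
    intro S _
    rw [← sum_powerset_neg_one_pow_card, Finset.mul_sum]
    refine Finset.sum_congr rfl fun F hF => ?_
    rw [Finset.mem_powerset] at hF
    have hFS : F.card ≤ S.card :=
      le_trans (Finset.card_le_card hF) (Finset.card_le_card Finset.inter_subset_left)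
    rw [neg_one_pow_sub hFS]
  rw [Finset.sum_congr rfl hinner]
  simp only [mul_ite, mul_one, mul_zero]
  rw [← Finset.sum_filter]
  have hset : ((Finset.range m).powerset.filter (fun S => Dc ⊆ S)).filter
      (fun S => S ∩ G = ∅)
      = (Finset.range m \ G).powerset.filter (fun S => Dc ⊆ S) := by
    ext S
    simp only [Finset.mem_filter, Finset.mem_powerset, Finset.subset_sdiff]
    rw [← Finset.disjoint_iff_inter_eq_empty]
    tauto
  rw [hset, sum_powerset_filter_subset]

end Stmt4Aux
namespace Stmt4Aux

open Finset Function

variable {A T T' : Type*} [AddCommGroup A] [LinearOrder T] [LinearOrder T']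

lemma toSeq_eq {n : ℕ} (κ : Fin n → A) {i : ℕ} (h : i < n) : toSeq κ i = κ ⟨i, h⟩ :=
  dif_pos h

noncomputable def mkP1 (S : Finset ℕ) (n a : ℕ) (ha : 1 ≤ a) : Fin n → Fin a :=
  fun x => ⟨min (cutVal S (x : ℕ)) (a - 1), by omega⟩

noncomputable def mkP2 (S F : Finset ℕ) (a b : ℕ) (hb : 1 ≤ b) : Fin a → Fin b :=
  fun jj => ⟨min ((F.filter (fun f => cutVal S f < (jj : ℕ))).card) (b - 1), by omega⟩

lemma mkP1_val {S : Finset ℕ} {n a : ℕ} (ha : 1 ≤ a) (hca : S.card + 1 = a) (x : Fin n) :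
    (mkP1 S n a ha x : ℕ) = cutVal S (x : ℕ) := by
  simp only [mkP1]
  exact min_eq_left (by have := cutVal_le S (x : ℕ); omega)

lemma mkP2_val {S F : Finset ℕ} {a b : ℕ} (hb : 1 ≤ b) (hcb : F.card + 1 = b) (jj : Fin a) :
    (mkP2 S F a b hb jj : ℕ) = (F.filter (fun f => cutVal S f < (jj : ℕ))).card := by
  simp only [mkP2]
  refine min_eq_left ?_
  have := Finset.card_le_card (Finset.filter_subset (fun f => cutVal S f < (jj : ℕ)) F)
  omega

lemma card_eq (τ : A → T) (τt : A → T') {n : ℕ} (hn : 1 ≤ n) (κ : Fin n → A)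
    {a b : ℕ} (ha : 1 ≤ a) (hb : 1 ≤ b) :
    (Finset.univ.filter
        (fun p : (Fin n → Fin a) × (Fin a → Fin b) =>
          Surjective p.1 ∧ Monotone p.1 ∧ Surjective p.2 ∧ Monotone p.2 ∧
          (∀ j : Fin a,
            Reversing τ (Finset.univ.filter (fun i : Fin n => p.1 i = j)).card
              (fiberSeq κ (Finset.univ.filter (fun i : Fin n => p.1 i = j)))) ∧
          Semistable τt b
            (fun k => if h : k < b then
              ∑ i ∈ Finset.univ.filter (fun i : Fin n => p.2 (p.1 i) = ⟨k, h⟩), κ i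
            else 0))).card
    = ((((Finset.range (n - 1)).powerset ×ˢ (Finset.range (n - 1)).powerset).filter
        (fun q => (Finset.range (n - 1) \ dSet τ κ) ⊆ q.1 ∧ q.2 ⊆ q.1 ∩ gSet τt κ)).filter
          (fun q => q.1.card + 1 = a ∧ q.2.card + 1 = b)).card := by
  classical
  refine Finset.card_nbij'
    (fun p => (cutSetF p.1, cutSetF (fun x => p.2 (p.1 x))))
    (fun q => (mkP1 q.1 n a ha, mkP2 q.1 q.2 a b hb)) ?_ ?_ ?_ ?_
  · -- forward membership
    intro p hp
    simp only [Finset.mem_coe, Finset.mem_filter, Finset.mem_univ, true_and] at hp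
    obtain ⟨h1s, h1m, h2s, h2m, hrev, hsemi⟩ := hp
    have hcm : Monotone (fun x => p.2 (p.1 x)) := fun x y h => h2m (h1m h)
    have hcs : Surjective (fun x => p.2 (p.1 x)) := h2s.comp h1s
    simp only [Finset.mem_coe, Finset.mem_filter, Finset.mem_product, Finset.mem_powerset]
    refine ⟨⟨⟨cutSetF_subset _, cutSetF_subset _⟩, ?_, ?_⟩, ?_, ?_⟩
    · -- Dc ⊆ cutSetF p.1
      intro i hi
      rw [Finset.mem_sdiff, Finset.mem_range] at hi
      obtain ⟨hir, hnd⟩ := hi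
      rw [mem_cutSetF hn]
      refine ⟨by omega, fun heq => ?_⟩
      have hdesc := (rev_iff h1m h1s κ τ).mp hrev i (by omega) heq
      refine hnd ?_
      rw [dSet, Finset.mem_filter, Finset.mem_range]
      refine ⟨hir, ?_⟩
      rw [toSeq_eq κ (show i < n by omega), toSeq_eq κ (show i + 1 < n by omega)]
      exact hdesc
    · -- F ⊆ S ∩ G
      intro i hi
      obtain ⟨h, hne⟩ := (mem_cutSetF hn).mp hi
      rw [Finset.mem_inter]
      constructor
      · rw [mem_cutSetF hn]
        exact ⟨h, fun heq => hne (by rw [heq])⟩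
      · rw [gSet, Finset.mem_filter, Finset.mem_range]
        exact ⟨by omega, (semi_iff hcm hcs κ τt hn).mp hsemi i hi⟩
    · rw [card_cutSetF h1m h1s hn]; omega
    · rw [card_cutSetF hcm hcs hn]; omega
  · -- backward membership
    intro q hq
    simp only [Finset.mem_coe, Finset.mem_filter, Finset.mem_product, Finset.mem_powerset] at hq
    obtain ⟨⟨⟨hq1, hq2⟩, hDc, hFG⟩, hca, hcb⟩ := hq
    have hFS : q.2 ⊆ q.1 := hFG.trans Finset.inter_subset_left
    have hFs2 : q.2 ⊆ Finset.range (n - 1) := hFS.trans hq1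
    have hp1 : ∀ x : Fin n, (mkP1 q.1 n a ha x : ℕ) = cutVal q.1 (x : ℕ) :=
      mkP1_val ha hca
    have hp2 : ∀ jj : Fin a, (mkP2 q.1 q.2 a b hb jj : ℕ)
        = (q.2.filter (fun f => cutVal q.1 f < (jj : ℕ))).card := mkP2_val hb hcb
    have h1m : Monotone (mkP1 q.1 n a ha) := cutMap_mono hp1
    have h1s : Surjective (mkP1 q.1 n a ha) := cutMap_surj hq1 hn hca hp1
    have h2m : Monotone (mkP2 q.1 q.2 a b hb) := cutMap2_mono hp2
    have hcomp : ∀ x : Fin n, ((mkP2 q.1 q.2 a b hb) (mkP1 q.1 n a ha x) : ℕ)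
        = cutVal q.2 (x : ℕ) := comp_val hFS hp1 hp2
    have hcm : Monotone (fun x => (mkP2 q.1 q.2 a b hb) (mkP1 q.1 n a ha x)) :=
      fun x y h => h2m (h1m h)
    have hcs : Surjective (fun x => (mkP2 q.1 q.2 a b hb) (mkP1 q.1 n a ha x)) := by
      intro k
      obtain ⟨i, hi, hval⟩ := cutVal_exists hFs2 (k := (k : ℕ)) (by have := k.2; omega)
      refine ⟨⟨i, by omega⟩, Fin.ext ?_⟩
      rw [hcomp]
      exact hval
    have h2s : Surjective (mkP2 q.1 q.2 a b hb) := by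
      intro k
      obtain ⟨x, hx⟩ := hcs k
      exact ⟨mkP1 q.1 n a ha x, hx⟩
    simp only [Finset.mem_coe, Finset.mem_filter, Finset.mem_univ, true_and]
    have hcut2 : cutSetF (fun x => (mkP2 q.1 q.2 a b hb) (mkP1 q.1 n a ha x)) = q.2 :=
      cutSetF_eq hFs2 hn hcomp
    have hcut1 : cutSetF (mkP1 q.1 n a ha) = q.1 := cutSetF_eq hq1 hn hp1
    refine ⟨h1s, h1m, h2s, h2m, ?_, ?_⟩
    · refine (rev_iff h1m h1s κ τ).mpr ?_
      intro i h heq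
      have hval : cutVal q.1 i = cutVal q.1 (i + 1) := by
        have e1 := hp1 ⟨i, by omega⟩
        have e2 := hp1 ⟨i + 1, h⟩
        simp only [Fin.val_mk] at e1 e2
        rw [← e1, ← e2, heq]
      have hnotq : i ∉ q.1 := by
        intro hiq
        rw [cutVal_succ, if_pos hiq] at hval
        omega
      have hid : i ∈ dSet τ κ := by
        by_contra hnd
        exact hnotq (hDc (Finset.mem_sdiff.mpr ⟨Finset.mem_range.mpr (by omega), hnd⟩))
      rw [dSet, Finset.mem_filter] at hid
      have hdesc := hid.2
      rw [toSeq_eq κ (show i < n by omega), toSeq_eq κ (show i + 1 < n by omega)] at hdesc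
      exact hdesc
    · refine (semi_iff hcm hcs κ τt hn).mpr ?_
      intro i hi
      rw [hcut2] at hi
      have higs : i ∈ gSet τt κ := Finset.mem_inter.mp (hFG hi) |>.2
      rw [gSet, Finset.mem_filter] at higs
      exact higs.2
  · -- left inverse
    intro p hp
    simp only [Finset.mem_coe, Finset.mem_filter, Finset.mem_univ, true_and] at hp
    obtain ⟨h1s, h1m, h2s, h2m, hrev, hsemi⟩ := hp
    have hcm : Monotone (fun x => p.2 (p.1 x)) := fun x y h => h2m (h1m h)
    have hcs : Surjective (fun x => p.2 (p.1 x)) := h2s.comp h1s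
    have hca : (cutSetF p.1).card + 1 = a := by rw [card_cutSetF h1m h1s hn]; omega
    have hcb : (cutSetF (fun x => p.2 (p.1 x))).card + 1 = b := by
      rw [card_cutSetF hcm hcs hn]
      have := ((p.2 (p.1 ⟨0, by omega⟩))).pos
      omega
    have hFS : cutSetF (fun x => p.2 (p.1 x)) ⊆ cutSetF p.1 := by
      intro i hi
      obtain ⟨h, hne⟩ := (mem_cutSetF hn).mp hi
      rw [mem_cutSetF hn]
      exact ⟨h, fun heq => hne (by rw [heq])⟩
    have hp1 : ∀ x : Fin n, (mkP1 (cutSetF p.1) n a ha x : ℕ) = cutVal (cutSetF p.1) (x : ℕ) :=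
      mkP1_val ha hca
    have hp2 : ∀ jj : Fin a,
        (mkP2 (cutSetF p.1) (cutSetF (fun x => p.2 (p.1 x))) a b hb jj : ℕ)
        = ((cutSetF (fun x => p.2 (p.1 x))).filter
            (fun f => cutVal (cutSetF p.1) f < (jj : ℕ))).card := mkP2_val hb hcb
    have hval1 : ∀ x : Fin n, (mkP1 (cutSetF p.1) n a ha x : ℕ) = (p.1 x : ℕ) := by
      intro x
      rw [hp1 x, cutVal_cutSetF h1m h1s (x : ℕ) x.2]
    have heq1 : mkP1 (cutSetF p.1) n a ha = p.1 := by
      funext x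
      exact Fin.ext (by rw [hval1 x])
    have hcompv : ∀ x : Fin n,
        ((mkP2 (cutSetF p.1) (cutSetF (fun x => p.2 (p.1 x))) a b hb) (mkP1 (cutSetF p.1) n a ha x) : ℕ)
        = cutVal (cutSetF (fun x => p.2 (p.1 x))) (x : ℕ) := comp_val hFS hp1 hp2
    have heq2 : mkP2 (cutSetF p.1) (cutSetF (fun x => p.2 (p.1 x))) a b hb = p.2 := by
      funext jj
      obtain ⟨x, hx⟩ := h1s jj
      refine Fin.ext ?_
      have e1 := hcompv x
      rw [heq1, hx] at e1
      rw [e1, cutVal_cutSetF hcm hcs (x : ℕ) x.2, hx]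
    exact Prod.ext heq1 heq2
  · -- right inverse
    intro q hq
    simp only [Finset.mem_coe, Finset.mem_filter, Finset.mem_product, Finset.mem_powerset] at hq
    obtain ⟨⟨⟨hq1, hq2⟩, hDc, hFG⟩, hca, hcb⟩ := hq
    have hFS : q.2 ⊆ q.1 := hFG.trans Finset.inter_subset_left
    have hFs2 : q.2 ⊆ Finset.range (n - 1) := hFS.trans hq1
    have hp1 : ∀ x : Fin n, (mkP1 q.1 n a ha x : ℕ) = cutVal q.1 (x : ℕ) :=
      mkP1_val ha hca
    have hp2 : ∀ jj : Fin a, (mkP2 q.1 q.2 a b hb jj : ℕ)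
        = (q.2.filter (fun f => cutVal q.1 f < (jj : ℕ))).card := mkP2_val hb hcb
    have hcomp : ∀ x : Fin n, ((mkP2 q.1 q.2 a b hb) (mkP1 q.1 n a ha x) : ℕ)
        = cutVal q.2 (x : ℕ) := comp_val hFS hp1 hp2
    have hcut1 : cutSetF (mkP1 q.1 n a ha) = q.1 := cutSetF_eq hq1 hn hp1
    have hcut2 : cutSetF (fun x => (mkP2 q.1 q.2 a b hb) (mkP1 q.1 n a ha x)) = q.2 :=
      cutSetF_eq hFs2 hn hcomp
    exact Prod.ext hcut1 hcut2

end Stmt4Aux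
namespace Stmt4Aux

open Finset Function

variable {A T T' : Type*} [AddCommGroup A] [LinearOrder T] [LinearOrder T']

lemma rhs_eval (τ : A → T) (τt : A → T') {n : ℕ} (hn : 1 ≤ n) (κ : Fin n → A) :
    (∑ a ∈ Finset.Icc 1 n, ∑ b ∈ Finset.Icc 1 a,
      ∑ p ∈ Finset.univ.filter
          (fun p : (Fin n → Fin a) × (Fin a → Fin b) =>
            Surjective p.1 ∧ Monotone p.1 ∧ Surjective p.2 ∧ Monotone p.2 ∧
            (∀ j : Fin a,
              Reversing τ (Finset.univ.filter (fun i : Fin n => p.1 i = j)).card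
                (fiberSeq κ (Finset.univ.filter (fun i : Fin n => p.1 i = j)))) ∧
            Semistable τt b
              (fun k => if h : k < b then
                ∑ i ∈ Finset.univ.filter (fun i : Fin n => p.2 (p.1 i) = ⟨k, h⟩), κ i
              else 0)),
        ((-1 : ℤ)) ^ (a - b))
    = if Finset.range (n - 1) \ gSet τt κ = Finset.range (n - 1) \ dSet τ κ
      then (-1 : ℤ) ^ (Finset.range (n - 1) \ dSet τ κ).card else 0 := by
  classical
  set PP := ((Finset.range (n - 1)).powerset ×ˢ (Finset.range (n - 1)).powerset).filter
      (fun q => (Finset.range (n - 1) \ dSet τ κ) ⊆ q.1 ∧ q.2 ⊆ q.1 ∩ gSet τt κ) with hPP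
  have hYempty : ∀ a b : ℕ, a < b →
      PP.filter (fun q => q.1.card + 1 = a ∧ q.2.card + 1 = b) = ∅ := by
    intro a b hab
    refine Finset.eq_empty_of_forall_notMem fun q hq => ?_
    simp only [hPP, Finset.mem_filter, Finset.mem_product, Finset.mem_powerset] at hq
    obtain ⟨⟨_, _, hFG⟩, hca, hcb⟩ := hq
    have := Finset.card_le_card (hFG.trans Finset.inter_subset_left)
    omega
  have h2 : ∀ a ∈ Finset.Icc 1 n,
      (∑ b ∈ Finset.Icc 1 a,
        ∑ p ∈ Finset.univ.filter
            (fun p : (Fin n → Fin a) × (Fin a → Fin b) =>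
              Surjective p.1 ∧ Monotone p.1 ∧ Surjective p.2 ∧ Monotone p.2 ∧
              (∀ j : Fin a,
                Reversing τ (Finset.univ.filter (fun i : Fin n => p.1 i = j)).card
                  (fiberSeq κ (Finset.univ.filter (fun i : Fin n => p.1 i = j)))) ∧
              Semistable τt b
                (fun k => if h : k < b then
                  ∑ i ∈ Finset.univ.filter (fun i : Fin n => p.2 (p.1 i) = ⟨k, h⟩), κ i
                else 0)),
          ((-1 : ℤ)) ^ (a - b))
      = ∑ b ∈ Finset.Icc 1 n,
          (((PP.filter (fun q => q.1.card + 1 = a ∧ q.2.card + 1 = b)).card : ℤ)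
            * (-1) ^ (a - b)) := by
    intro a hA
    rw [Finset.mem_Icc] at hA
    have hstep : ∀ b ∈ Finset.Icc 1 a,
        (∑ p ∈ Finset.univ.filter
            (fun p : (Fin n → Fin a) × (Fin a → Fin b) =>
              Surjective p.1 ∧ Monotone p.1 ∧ Surjective p.2 ∧ Monotone p.2 ∧
              (∀ j : Fin a,
                Reversing τ (Finset.univ.filter (fun i : Fin n => p.1 i = j)).card
                  (fiberSeq κ (Finset.univ.filter (fun i : Fin n => p.1 i = j)))) ∧
              Semistable τt b
                (fun k => if h : k < b then
                  ∑ i ∈ Finset.univ.filter (fun i : Fin n => p.2 (p.1 i) = ⟨k, h⟩), κ i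
                else 0)),
          ((-1 : ℤ)) ^ (a - b))
        = (((PP.filter (fun q => q.1.card + 1 = a ∧ q.2.card + 1 = b)).card : ℤ)
            * (-1) ^ (a - b)) := by
      intro b hB
      rw [Finset.mem_Icc] at hB
      rw [Finset.sum_const, card_eq τ τt hn κ (by omega : 1 ≤ a) (by omega : 1 ≤ b),
        nsmul_eq_mul, hPP]
    rw [Finset.sum_congr rfl hstep]
    refine Finset.sum_subset (Finset.Icc_subset_Icc_right hA.2) ?_
    intro b hbn hba
    rw [Finset.mem_Icc] at hbn
    rw [Finset.mem_Icc] at hba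
    rw [hYempty a b (by omega), Finset.card_empty]
    norm_num
  rw [Finset.sum_congr rfl h2, ← Finset.sum_product']
  have hmaps : ∀ q ∈ PP, (q.1.card + 1, q.2.card + 1) ∈ Finset.Icc 1 n ×ˢ Finset.Icc 1 n := by
    intro q hq
    simp only [hPP, Finset.mem_filter, Finset.mem_product, Finset.mem_powerset] at hq
    obtain ⟨⟨hq1, _⟩, _, hFG⟩ := hq
    have c1 : q.1.card ≤ n - 1 := by
      have := Finset.card_le_card hq1
      simpa using this
    have c2 : q.2.card ≤ q.1.card :=
      Finset.card_le_card (hFG.trans Finset.inter_subset_left)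
    simp only [Finset.mem_product, Finset.mem_Icc]
    omega
  have hfib : (∑ y ∈ Finset.Icc 1 n ×ˢ Finset.Icc 1 n,
      (((PP.filter (fun q => q.1.card + 1 = y.1 ∧ q.2.card + 1 = y.2)).card : ℤ)
        * (-1) ^ (y.1 - y.2)))
      = ∑ q ∈ PP, (-1 : ℤ) ^ (q.1.card - q.2.card) := by
    rw [← Finset.sum_fiberwise_of_maps_to hmaps (fun q => (-1 : ℤ) ^ (q.1.card - q.2.card))]
    refine Finset.sum_congr rfl fun y _ => ?_
    have hset : PP.filter (fun q => (q.1.card + 1, q.2.card + 1) = y)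
        = PP.filter (fun q => q.1.card + 1 = y.1 ∧ q.2.card + 1 = y.2) := by
      refine Finset.filter_congr fun q _ => ?_
      rw [Prod.ext_iff]
    rw [hset]
    have hval : ∀ q ∈ PP.filter (fun q => q.1.card + 1 = y.1 ∧ q.2.card + 1 = y.2),
        (-1 : ℤ) ^ (q.1.card - q.2.card) = (-1) ^ (y.1 - y.2) := by
      intro q hq
      simp only [Finset.mem_filter] at hq
      obtain ⟨_, e1, e2⟩ := hq
      congr 1
      omega
    rw [Finset.sum_congr rfl hval, Finset.sum_const, nsmul_eq_mul]
  rw [hfib]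
  have hprod : (∑ q ∈ PP, (-1 : ℤ) ^ (q.1.card - q.2.card))
      = ∑ S ∈ (Finset.range (n - 1)).powerset.filter
            (fun S => (Finset.range (n - 1) \ dSet τ κ) ⊆ S),
          ∑ F ∈ (S ∩ gSet τt κ).powerset, (-1 : ℤ) ^ (S.card - F.card) := by
    refine Finset.sum_finset_product PP _ _ ?_
    intro q
    simp only [hPP, Finset.mem_filter, Finset.mem_product, Finset.mem_powerset]
    constructor
    · rintro ⟨⟨h1, h2⟩, h3, h4⟩
      exact ⟨⟨h1, h3⟩, h4⟩
    · rintro ⟨⟨h1, h3⟩, h4⟩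
      exact ⟨⟨h1, (h4.trans Finset.inter_subset_right).trans (gSet_subset τt κ)⟩, h3, h4⟩
  rw [hprod, key_sum]

end Stmt4Aux
theorem stmt4 {A T T' : Type*} [AddCommGroup A] [LinearOrder T] [LinearOrder T']
    (C : Set A) (hC : ∀ a b : A, a ∈ C → b ∈ C → a + b ∈ C) (h0 : (0 : A) ∉ C)
    (τ : A → T) (τt : A → T') (hτ : WeakStability C τ) (hτt : WeakStability C τt)
    (n : ℕ) (hn : 1 ≤ n) (κ : Fin n → A) (hκ : ∀ i, κ i ∈ C) :
    Scoeff τ τt n (toSeq κ) =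
      ∑ a ∈ Finset.Icc 1 n, ∑ b ∈ Finset.Icc 1 a,
        ∑ p ∈ Finset.univ.filter
            (fun p : (Fin n → Fin a) × (Fin a → Fin b) =>
              Surjective p.1 ∧ Monotone p.1 ∧ Surjective p.2 ∧ Monotone p.2 ∧
              (∀ j : Fin a,
                Reversing τ (Finset.univ.filter (fun i : Fin n => p.1 i = j)).card
                  (fiberSeq κ (Finset.univ.filter (fun i : Fin n => p.1 i = j)))) ∧
              Semistable τt b
                (fun k => if h : k < b then
                  ∑ i ∈ Finset.univ.filter (fun i : Fin n => p.2 (p.1 i) = ⟨k, h⟩), κ i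
                else 0)),
          ((-1 : ℤ)) ^ (a - b) := by
  classical
  rw [Stmt4Aux.scoeff_eval τ τt κ, Stmt4Aux.rhs_eval τ τt hn κ]
  by_cases hdg : Stmt4Aux.dSet τ κ = Stmt4Aux.gSet τt κ
  · rw [if_pos hdg, if_pos (by rw [hdg]),
      Finset.card_sdiff_of_subset (Stmt4Aux.dSet_subset τ κ), Finset.card_range]
  · have hne : ¬ (Finset.range (n - 1) \ Stmt4Aux.gSet τt κ
        = Finset.range (n - 1) \ Stmt4Aux.dSet τ κ) := by
      intro he
      apply hdg
      have h1 := Finset.sdiff_sdiff_eq_self (Stmt4Aux.dSet_subset τ κ)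
      have h2 := Finset.sdiff_sdiff_eq_self (Stmt4Aux.gSet_subset τt κ)
      rw [← h1, ← he, h2]
    rw [if_neg hdg, if_neg hne]
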